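/- Suppose ⟨λ(w), H(z)⟩ + a(z) = ⟨λ̃(w), H̃(z)⟩ + b(z) + c(w) for all z ∈ ℝ^n and all w ∈ 𝒲, and suppose there exist m+1 points w_0, w_1, …, w_m ∈ 𝒲 such that the m×m matrix L whose l-th column is λ(w_l) − λ(w_0) is invertible. Then there exist an m×m real matrix M and a vector Q ∈ ℝ^m such that H(z) = M H̃(z) + Q for all z ∈ ℝ^n; explicitly, one may take M = (Lᵀ)^{-1} L̃ᵀ and Q = (Lᵀ)^{-1} d, where L̃ is the matrix whose l-th column is λ̃(w_l) − λ̃(w_0) and d is the vector with entries d_l = c(w_l) − c(w_0). -/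
import Mathlib


open Matrix

/-- **The linear-algebraic step of the iVAE identifiability proof.**
Suppose `⟨λ(w), H(z)⟩ + a(z) = ⟨λ̃(w), H̃(z)⟩ + b(z) + c(w)` for all `z ∈ ℝ^n` and `w ∈ 𝒲`,
and there are `m+1` points `w₀, ws 0, …, ws (m-1)` such that the `m × m` matrix `L` whose
`l`-th column is `λ(ws l) - λ(w₀)` is invertible.  Then there exist a matrix `M` and a
vector `Q` with `H(z) = M H̃(z) + Q` for all `z`; explicitly one may take
`M = (Lᵀ)⁻¹ L̃ᵀ` and `Q = (Lᵀ)⁻¹ d`, where `L̃` has `l`-th column `λ̃(ws l) - λ̃(w₀)` and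
`d` has entries `d l = c(ws l) - c(w₀)`. -/
theorem expfam_sufficient_statistics_affine
    {n m : ℕ} {W : Type*}
    (H H' : (Fin n → ℝ) → (Fin m → ℝ))
    (lam lam' : W → Fin m → ℝ)
    (a b : (Fin n → ℝ) → ℝ) (c : W → ℝ)
    (heq : ∀ (z : Fin n → ℝ) (w : W),
      (∑ i, lam w i * H z i) + a z = (∑ i, lam' w i * H' z i) + b z + c w)
    (w₀ : W) (ws : Fin m → W)
    (L L' : Matrix (Fin m) (Fin m) ℝ) (dv : Fin m → ℝ)
    (hL : L = Matrix.of fun i l => lam (ws l) i - lam w₀ i)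
    (hL' : L' = Matrix.of fun i l => lam' (ws l) i - lam' w₀ i)
    (hdv : dv = fun l => c (ws l) - c w₀)
    (hLinv : IsUnit L.det) :
    ∃ (M : Matrix (Fin m) (Fin m) ℝ) (Q : Fin m → ℝ),
      M = L.transpose⁻¹ * L'.transpose ∧ Q = L.transpose⁻¹.mulVec dv ∧
      ∀ z, H z = M.mulVec (H' z) + Q := by
  refine ⟨L.transpose⁻¹ * L'.transpose, L.transpose⁻¹.mulVec dv, rfl, rfl, ?_⟩
  have hdet : IsUnit L.transpose.det := by rwa [Matrix.det_transpose]
  have key : ∀ z, L.transpose.mulVec (H z) = L'.transpose.mulVec (H' z) + dv := by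
    intro z
    funext l
    have h1 := heq z (ws l)
    have h0 := heq z w₀
    have : (∑ i, (lam (ws l) i - lam w₀ i) * H z i)
        = (∑ i, (lam' (ws l) i - lam' w₀ i) * H' z i) + (c (ws l) - c w₀) := by
      simp only [sub_mul, Finset.sum_sub_distrib]
      linarith
    simpa [Matrix.mulVec, dotProduct, Matrix.transpose_apply, hL, hL', hdv,
      mul_comm] using this
  intro z
  have := congrArg (L.transpose⁻¹.mulVec) (key z)
  rw [Matrix.mulVec_mulVec, Matrix.nonsing_inv_mul _ hdet, Matrix.one_mulVec,
    Matrix.mulVec_add] at this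
  rw [← Matrix.mulVec_mulVec]
  exact this
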